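/- Let L be a first-order language, M an L-structure, V a finite set, and for each J ⊆ V let ν^J be a probability measure on (M^J, B_J). Suppose that for every J ⊆ V and every bounded B_V-measurable f : M^V → ℝ: each slice x_J ↦ f(x_J ∪ x_{V∖J}) is B_J-measurable, the function x_{V∖J} ↦ ∫ f(x_J ∪ x_{V∖J}) dν^J(x_J) is B_{V∖J}-measurable, and ∫ f dν^V = ∫ (∫ f(x_J ∪ x_{V∖J}) dν^J(x_J)) dν^{V∖J}(x_{V∖J}). Then ν^V has J-regularity for every J ⊆ V. -/

import Mathlib

open FirstOrder MeasureTheory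
open scoped Classical

/-- `defCyl L M I` is the Boolean algebra `B⁰_{V,I}` of subsets of `M^V` of the form
`{x : V → M | x|_I ∈ D}` with `D ⊆ M^I` definable with parameters from `M`. -/
def defCyl (L : FirstOrder.Language) (M : Type*) [L.Structure M] {V : Type*} (I : Set V) :
    Set (Set (V → M)) :=
  {S | ∃ D : Set (↥I → M), (Set.univ : Set M).Definable L D ∧
    S = {x : V → M | (fun i : ↥I => x ↑i) ∈ D}}

/-- `sigmaAlg L M 𝓘` is the σ-algebra `B_{V,𝓘}` on `M^V` generated by `⋃_{I ∈ 𝓘} B⁰_{V,I}`. -/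
def sigmaAlg (L : FirstOrder.Language) (M : Type*) [L.Structure M] {V : Type*}
    (𝓘 : Set (Set V)) : MeasurableSpace (V → M) :=
  MeasurableSpace.generateFrom (⋃ I ∈ 𝓘, defCyl L M I)

/-- The σ-algebra `B_V` on `M^V`. -/
def BV (L : FirstOrder.Language) (M : Type*) [L.Structure M] (V : Type*) :
    MeasurableSpace (V → M) :=
  sigmaAlg L M ({Set.univ} : Set (Set V))

/-- A probability measure `ν` on `(M^V, B_V)` has `J`-regularity. -/
def HasJRegularity (L : FirstOrder.Language) (M : Type*) [L.Structure M] (V : Type*)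
    [Fintype V] (ν : @Measure (V → M) (BV L M V)) (J : Set V) : Prop :=
  ∀ 𝓘 : Finset (Set V), (∀ I ∈ 𝓘, I ∩ J ⊂ I) →
  ∀ f : Set V → (V → M) → ℝ,
    (∀ I ∈ 𝓘, (∃ C, ∀ x, |f I x| ≤ C) ∧
      Measurable[sigmaAlg L M ({I} : Set (Set V))] (f I)) →
  ∀ g : (V → M) → ℝ, (∃ C, ∀ x, |g x| ≤ C) →
    Measurable[sigmaAlg L M ({J} : Set (Set V))] g →
    ∫ x, (g x - MeasureTheory.condExp
        (sigmaAlg L M {K : Set V | ∃ I ∈ 𝓘, K ⊆ I ∩ J}) ν g x) *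
      ∏ I ∈ 𝓘, f I x ∂ν = 0

/-- `combine J a b` is the tuple `x_J ∪ x_{V∖J} : V → M` built from `a : M^J` and
`b : M^{V∖J}`. -/
noncomputable def combine {V M : Type*} (J : Set V) (a : ↥J → M) (b : ↥(Jᶜ) → M) :
    V → M :=
  fun v => if h : v ∈ J then a ⟨v, h⟩ else b ⟨v, h⟩

section Aux

theorem definable_substConst {L : FirstOrder.Language} {M : Type*} [L.Structure M]
    {α β : Type*} (σ : α → β ⊕ M) {D : Set (α → M)}
    (hD : (Set.univ : Set M).Definable L D) :
    (Set.univ : Set M).Definable L {c : β → M | (fun a => Sum.elim c id (σ a)) ∈ D} := by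
  obtain ⟨φ, rfl⟩ := hD
  refine ⟨φ.subst (fun a => Sum.elim FirstOrder.Language.Term.var
      (fun m => (L.con (⟨m, Set.mem_univ m⟩ : (Set.univ : Set M))).term) (σ a)), ?_⟩
  ext c
  simp only [Set.mem_setOf_eq]
  have h1 : ∀ a, ((Sum.elim FirstOrder.Language.Term.var
      (fun m => (L.con (⟨m, Set.mem_univ m⟩ : (Set.univ : Set M))).term) (σ a) :
        _).realize c) = Sum.elim c id (σ a) := by
    intro a
    cases h : σ a with
    | inl b => simp
    | inr m => simp [FirstOrder.Language.Term.realize_con]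
  rw [show (fun a => Sum.elim c id (σ a)) = (fun a => (Sum.elim FirstOrder.Language.Term.var
      (fun m => (L.con (⟨m, Set.mem_univ m⟩ : (Set.univ : Set M))).term) (σ a) :
        _).realize c) from funext fun a => (h1 a).symm]
  exact Iff.symm FirstOrder.Language.BoundedFormula.realize_subst

variable {L : FirstOrder.Language} {M : Type*} [L.Structure M] {V : Type*}

theorem defCyl_mono {K K' : Set V} (h : K ⊆ K') : defCyl L M K ⊆ defCyl L M K' := by
  rintro S ⟨D, hD, rfl⟩
  refine ⟨(fun g : ↥K' → M => g ∘ (fun k : ↥K => (⟨↑k, h k.2⟩ : ↥K'))) ⁻¹' D,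
    hD.preimage_comp _, ?_⟩
  ext x
  simp only [Set.mem_setOf_eq, Set.mem_preimage]
  rfl

theorem sigmaAlg_mono {𝓘₁ 𝓘₂ : Set (Set V)}
    (h : ∀ K ∈ 𝓘₁, ∃ K' ∈ 𝓘₂, K ⊆ K') : sigmaAlg L M 𝓘₁ ≤ sigmaAlg L M 𝓘₂ := by
  refine MeasurableSpace.generateFrom_le fun S hS => ?_
  simp only [Set.mem_iUnion] at hS
  obtain ⟨K, hK, hSK⟩ := hS
  obtain ⟨K', hK', hKK'⟩ := h K hK
  exact MeasurableSpace.measurableSet_generateFrom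
    (Set.mem_iUnion₂.2 ⟨K', hK', defCyl_mono hKK' hSK⟩)

theorem sigmaAlg_le_BV (𝓘 : Set (Set V)) : sigmaAlg L M 𝓘 ≤ BV L M V :=
  sigmaAlg_mono fun K _ => ⟨Set.univ, rfl, Set.subset_univ K⟩

/-- Slices of cylinder sets are cylinder sets. -/
theorem slice_mem_defCyl {I J : Set V} (b : ↥(Jᶜ) → M) {S : Set (V → M)}
    (hS : S ∈ defCyl L M I) :
    {a : ↥J → M | combine J a b ∈ S} ∈ defCyl L M (Subtype.val ⁻¹' I : Set ↥J) := by
  obtain ⟨D, hD, rfl⟩ := hS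
  classical
  set K' : Set ↥J := Subtype.val ⁻¹' I with hK'
  set σ : ↥I → ↥K' ⊕ M := fun i => if h : (↑i : V) ∈ J then Sum.inl (⟨⟨↑i, h⟩, i.2⟩ : ↥K')
    else Sum.inr (b ⟨↑i, h⟩) with hσ
  refine ⟨{c : ↥K' → M | (fun i : ↥I => Sum.elim c id (σ i)) ∈ D},
    definable_substConst _ hD, ?_⟩
  have key : ∀ a : ↥J → M, (fun i : ↥I => combine J a b ↑i)
      = fun i : ↥I => Sum.elim (fun k : ↥K' => a ↑k) id (σ i) := by
    intro a
    funext i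
    by_cases h : (↑i : V) ∈ J <;> simp [combine, hσ, h]
  ext a
  simp only [Set.mem_setOf_eq]
  rw [key a]

/-- Pullback of a cylinder on `M^J` along the projection is a cylinder on `M^V`. -/
theorem preimage_mem_defCyl {J : Set V} {K' : Set ↥J} {S : Set (↥J → M)}
    (hS : S ∈ defCyl L M K') :
    (fun (x : V → M) (j : ↥J) => x ↑j) ⁻¹' S ∈ defCyl L M (Subtype.val '' K') := by
  obtain ⟨D, hD, rfl⟩ := hS
  refine ⟨(fun g : ↥(Subtype.val '' K') → M =>
      g ∘ (fun k : ↥K' => (⟨↑↑k, ⟨↑k, k.2, rfl⟩⟩ : ↥(Subtype.val '' K')))) ⁻¹' D,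
    hD.preimage_comp _, ?_⟩
  ext x
  simp only [Set.mem_preimage, Set.mem_setOf_eq]
  rfl

/-- Conversely, a cylinder on `M^V` over a subset of `J` is the pullback of a cylinder. -/
theorem exists_preimage_of_mem_defCyl {J : Set V} {K' : Set ↥J} {T : Set (V → M)}
    (hT : T ∈ defCyl L M (Subtype.val '' K')) :
    ∃ S ∈ defCyl L M K', (fun (x : V → M) (j : ↥J) => x ↑j) ⁻¹' S = T := by
  obtain ⟨D, hD, rfl⟩ := hT
  let e' : ↥(Subtype.val '' K') → ↥K' := fun k'' => ⟨k''.2.choose, k''.2.choose_spec.1⟩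
  have he' : ∀ k'' : ↥(Subtype.val '' K'), (↑(↑(e' k'') : ↥J) : V) = ↑k'' :=
    fun k'' => k''.2.choose_spec.2
  refine ⟨{y : ↥J → M | (fun k : ↥K' => y ↑k) ∈
      (fun g : ↥K' → M => g ∘ e') ⁻¹' D}, ⟨_, hD.preimage_comp _, rfl⟩, ?_⟩
  ext x
  simp only [Set.mem_preimage, Set.mem_setOf_eq]
  have key : ((fun k : ↥K' => x ↑↑k) ∘ e') = fun i : ↥(Subtype.val '' K') => x ↑i :=
    funext fun k'' => congrArg x (he' k'')
  rw [key]

theorem comap_sigmaAlg (J : Set V) (𝓙 : Set (Set ↥J)) :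
    MeasurableSpace.comap (fun (x : V → M) (j : ↥J) => x ↑j) (sigmaAlg L M 𝓙)
      = sigmaAlg L M ((Set.image (Subtype.val : ↥J → V)) '' 𝓙) := by
  rw [show sigmaAlg L M 𝓙 = MeasurableSpace.generateFrom (⋃ K ∈ 𝓙, defCyl L M K) from rfl,
    MeasurableSpace.comap_generateFrom]
  apply le_antisymm
  · refine MeasurableSpace.generateFrom_le fun t ht => ?_
    obtain ⟨S, hS, rfl⟩ := ht
    simp only [Set.mem_iUnion] at hS
    obtain ⟨K', hK', hSK'⟩ := hS
    exact MeasurableSpace.measurableSet_generateFrom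
      (Set.mem_iUnion₂.2 ⟨Subtype.val '' K', ⟨K', hK', rfl⟩, preimage_mem_defCyl hSK'⟩)
  · refine MeasurableSpace.generateFrom_le fun t ht => ?_
    simp only [Set.mem_iUnion] at ht
    obtain ⟨Kim, ⟨K', hK', rfl⟩, htK⟩ := ht
    obtain ⟨S, hS, hpre⟩ := exists_preimage_of_mem_defCyl htK
    exact MeasurableSpace.measurableSet_generateFrom
      ⟨S, Set.mem_iUnion₂.2 ⟨K', hK', hS⟩, hpre⟩

theorem comap_BV_eq (J : Set V) :
    MeasurableSpace.comap (fun (x : V → M) (j : ↥J) => x ↑j) (BV L M ↥J)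
      = sigmaAlg L M ({J} : Set (Set V)) := by
  rw [show BV L M ↥J = sigmaAlg L M ({Set.univ} : Set (Set ↥J)) from rfl, comap_sigmaAlg]
  congr 1
  rw [Set.image_singleton, Subtype.coe_image_univ]

theorem measurable_into_sigmaAlg {α : Type*} {mα : MeasurableSpace α} {W : Type*}
    (𝓘 : Set (Set W)) (p : α → W → M)
    (h : ∀ S ∈ ⋃ K ∈ 𝓘, defCyl L M K, MeasurableSet[mα] (p ⁻¹' S)) :
    @Measurable α (W → M) mα (sigmaAlg L M 𝓘) p :=
  measurable_generateFrom h

theorem comap_fiber_eq {α β : Type*} {p : α → β} {m' : MeasurableSpace β} {u : α → ℝ}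
    (hu : Measurable[m'.comap p] u) {x y : α} (h : p x = p y) : u x = u y := by
  obtain ⟨t, _, hteq⟩ := MeasurableSpace.measurableSet_comap.1
    (hu (measurableSet_singleton (u x)))
  have hx : x ∈ p ⁻¹' t := by rw [hteq]; exact rfl
  have hy : y ∈ p ⁻¹' t := by rw [Set.mem_preimage, ← h]; exact hx
  rw [hteq] at hy
  exact hy.symm

theorem measurable_comp_comap {α β : Type*} {p : α → β} {n : MeasurableSpace β}
    {u : α → ℝ} (hu : Measurable[n.comap p] u) {q : β → α} (hq : ∀ y, p (q y) = y) :
    Measurable[n] (fun y => u (q y)) := by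
  intro s hs
  obtain ⟨t, ht, hteq⟩ := MeasurableSpace.measurableSet_comap.1 (hu hs)
  have : (fun y => u (q y)) ⁻¹' s = t := by
    ext y
    have : q y ∈ u ⁻¹' s ↔ q y ∈ p ⁻¹' t := by rw [hteq]
    simpa [hq y] using this
  rw [this]
  exact ht

end Aux

theorem product_regular (L : FirstOrder.Language) (M : Type*) [L.Structure M]
    (V : Type*) [Fintype V]
    (νV : @Measure (V → M) (BV L M V)) (hνV : IsProbabilityMeasure νV)
    (ν : (J : Set V) → @Measure (↥J → M) (BV L M ↥J))
    (hν : ∀ J, IsProbabilityMeasure (ν J))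
    (hFub : ∀ (J : Set V) (f : (V → M) → ℝ),
      (∃ C, ∀ x, |f x| ≤ C) → Measurable[BV L M V] f →
      (∀ b : ↥(Jᶜ) → M, Measurable[BV L M ↥J] (fun a => f (combine J a b))) ∧
      Measurable[BV L M ↥(Jᶜ)] (fun b => ∫ a, f (combine J a b) ∂(ν J)) ∧
      ∫ x, f x ∂νV = ∫ b, (∫ a, f (combine J a b) ∂(ν J)) ∂(ν (Jᶜ))) :
    ∀ J : Set V, HasJRegularity L M V νV J := by
  intro J 𝓘 _h𝓘 f hf g hgbdd hgmeas
  classical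
  obtain ⟨Cg, hCg⟩ := hgbdd
  set m : MeasurableSpace (V → M) := sigmaAlg L M {K : Set V | ∃ I ∈ 𝓘, K ⊆ I ∩ J} with hmdef
  set mJ : MeasurableSpace (V → M) := sigmaAlg L M ({J} : Set (Set V)) with hmJdef
  set 𝓙 : Set (Set ↥J) := {K' : Set ↥J | ∃ I ∈ 𝓘, Subtype.val '' K' ⊆ I ∩ J} with h𝓙def
  set n : MeasurableSpace (↥J → M) := sigmaAlg L M 𝓙 with hndef
  letI : MeasurableSpace (V → M) := BV L M V
  letI : MeasurableSpace (↥J → M) := BV L M ↥J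
  letI : MeasurableSpace (↥(Jᶜ) → M) := BV L M ↥(Jᶜ)
  haveI := hνV
  haveI := hν J
  haveI := hν (Jᶜ)
  -- nonemptiness of `V → M`
  have hne : Nonempty (V → M) := by
    by_contra hne
    have huniv : (Set.univ : Set (V → M)) = ∅ :=
      Set.univ_eq_empty_iff.2 (not_nonempty_iff.1 hne)
    have h0 : νV Set.univ = 0 := by rw [huniv]; exact measure_empty
    rw [measure_univ] at h0
    exact one_ne_zero h0
  obtain ⟨x₀⟩ := hne
  have hCg0 : 0 ≤ Cg := le_trans (abs_nonneg _) (hCg x₀)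
  set π : (V → M) → (↥J → M) := fun x j => x ↑j with hπ
  set b₀ : ↥(Jᶜ) → M := fun j => x₀ ↑j with hb₀
  have hm_le : m ≤ BV L M V := sigmaAlg_le_BV _
  have hmJ_le : mJ ≤ BV L M V := sigmaAlg_le_BV _
  have hn_le : n ≤ BV L M ↥J := sigmaAlg_le_BV _
  have hmJ_comap : mJ = MeasurableSpace.comap π (BV L M ↥J) := (comap_BV_eq J).symm
  have hm_comap : m = MeasurableSpace.comap π n := by
    rw [hndef, comap_sigmaAlg, hmdef]
    apply le_antisymm
    · apply sigmaAlg_mono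
      rintro K ⟨I, hI, hKIJ⟩
      have hKJ : K ⊆ J := hKIJ.trans (Set.inter_subset_right)
      refine ⟨Subtype.val '' (Subtype.val ⁻¹' K : Set ↥J), ⟨Subtype.val ⁻¹' K, ⟨I, hI, ?_⟩, rfl⟩, ?_⟩
      · exact (Set.image_preimage_subset _ _).trans hKIJ
      · intro v hv
        exact ⟨⟨v, hKJ hv⟩, hv, rfl⟩
    · apply sigmaAlg_mono
      rintro K'' ⟨K', ⟨I, hI, hK'IJ⟩, rfl⟩
      exact ⟨Subtype.val '' K', ⟨I, hI, hK'IJ⟩, subset_rfl⟩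
  -- the product function and its bound
  have hfmeas : ∀ I ∈ 𝓘, Measurable[BV L M V] (f I) :=
    fun I hI => ((hf I hI).2).mono (sigmaAlg_le_BV _) le_rfl
  have hFmeas : Measurable[BV L M V] (fun x => ∏ I ∈ 𝓘, f I x) :=
    Finset.measurable_prod _ fun I hI => hfmeas I hI
  set B : Set V → ℝ := fun I => if h : I ∈ 𝓘 then ((hf I h).1).choose else 1 with hB
  have hBspec : ∀ I ∈ 𝓘, ∀ x, |f I x| ≤ B I := by
    intro I hI x
    rw [hB]
    simp only [dif_pos hI]
    exact ((hf I hI).1).choose_spec x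
  set CF : ℝ := ∏ I ∈ 𝓘, B I with hCF
  have hFbdd : ∀ x, |∏ I ∈ 𝓘, f I x| ≤ CF := by
    intro x
    rw [hCF, Finset.abs_prod]
    exact Finset.prod_le_prod (fun I _ => abs_nonneg _) (fun I hI => hBspec I hI x)
  have hCF0 : 0 ≤ CF := le_trans (abs_nonneg _) (hFbdd x₀)
  -- integrability helpers
  have intV : ∀ (h : (V → M) → ℝ) (C : ℝ), Measurable[BV L M V] h → (∀ x, |h x| ≤ C) →
      Integrable h νV := by
    intro h C hm hb
    refine Integrable.mono' (integrable_const C) hm.aestronglyMeasurable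
      (Filter.Eventually.of_forall fun x => ?_)
    simpa [Real.norm_eq_abs] using hb x
  have intJ : ∀ (h : (↥J → M) → ℝ) (C : ℝ), Measurable[BV L M ↥J] h → (∀ x, |h x| ≤ C) →
      Integrable h (ν J) := by
    intro h C hm hb
    refine Integrable.mono' (integrable_const C) hm.aestronglyMeasurable
      (Filter.Eventually.of_forall fun x => ?_)
    simpa [Real.norm_eq_abs] using hb x
  have hgmeasV : Measurable[BV L M V] g := hgmeas.mono hmJ_le le_rfl
  have hgInt : Integrable g νV := intV g Cg hgmeasV hCg
  haveI hSF : SigmaFinite (νV.trim hm_le) := inferInstance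
  set gc : (V → M) → ℝ := MeasureTheory.condExp m νV g with hgc
  have hgc_meas : Measurable[m] gc := stronglyMeasurable_condExp.measurable
  have hgcbdd : ∀ᵐ x ∂νV, |gc x| ≤ Cg := by
    have h := ae_bdd_condExp_of_ae_bdd (m := m) (μ := νV)
      (R := ⟨Cg, hCg0⟩) (f := g) (Filter.Eventually.of_forall hCg)
    exact h
  set gt : (V → M) → ℝ := fun x => max (-Cg) (min Cg (gc x)) with hgt
  have hgt_meas : Measurable[m] gt := measurable_const.max (measurable_const.min hgc_meas)
  have hgt_bdd : ∀ x, |gt x| ≤ Cg := by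
    intro x
    rw [hgt]
    exact abs_le.2 ⟨le_max_left _ _, max_le (by linarith) (min_le_left _ _)⟩
  have hgt_ae : gt =ᵐ[νV] gc := by
    refine hgcbdd.mono fun x hx => ?_
    have h1 := abs_le.1 hx
    rw [hgt]
    simp only
    rw [min_eq_right h1.2, max_eq_right h1.1]
  -- projections of combinations
  have hπcomb : ∀ (a : ↥J → M) (b : ↥(Jᶜ) → M), π (combine J a b) = a := by
    intro a b
    funext j
    simp [hπ, combine, j.2]
  have g_fiber : ∀ x y, π x = π y → g x = g y := by
    intro x y h
    have hg' : Measurable[(BV L M ↥J).comap π] g := by rw [← hmJ_comap]; exact hgmeas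
    exact comap_fiber_eq hg' h
  have gt_fiber : ∀ x y, π x = π y → gt x = gt y := by
    intro x y h
    have hg' : Measurable[MeasurableSpace.comap π n] gt := by rw [← hm_comap]; exact hgt_meas
    exact comap_fiber_eq hg' h
  -- G, g''
  set G : (↥J → M) → ℝ := fun a => g (combine J a b₀) with hG
  have hG_meas : Measurable[BV L M ↥J] G := by
    rw [hG]; exact (hFub J g ⟨Cg, hCg⟩ hgmeasV).1 b₀
  have hG_bdd : ∀ a, |G a| ≤ Cg := fun a => hCg _
  have hG_slice : ∀ (a : ↥J → M) (b : ↥(Jᶜ) → M), g (combine J a b) = G a := by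
    intro a b
    exact g_fiber _ _ (by rw [hπcomb, hπcomb])
  set g'' : (↥J → M) → ℝ := fun a => gt (combine J a b₀) with hg''
  have hg''_meas : Measurable[n] g'' := by
    rw [hg'']
    refine measurable_comp_comap ?_ (fun a => hπcomb a b₀)
    rw [← hm_comap]; exact hgt_meas
  have hg''_slice : ∀ (a : ↥J → M) (b : ↥(Jᶜ) → M), gt (combine J a b) = g'' a := by
    intro a b
    exact gt_fiber _ _ (by rw [hπcomb, hπcomb])
  have hg''_bdd : ∀ a, |g'' a| ≤ Cg := fun a => hgt_bdd _
  have hGInt : Integrable G (ν J) := intJ G Cg hG_meas hG_bdd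
  -- set-integral characterization of g''
  have key_setInt : ∀ s : Set (↥J → M), MeasurableSet[n] s →
      ∫ a in s, g'' a ∂(ν J) = ∫ a in s, G a ∂(ν J) := by
    intro s hs
    have hsBV : MeasurableSet[BV L M ↥J] s := hn_le _ hs
    have hTm : MeasurableSet[m] (π ⁻¹' s) := by
      rw [hm_comap]; exact ⟨s, hs, rfl⟩
    have hTV : MeasurableSet[BV L M V] (π ⁻¹' s) := hm_le _ hTm
    have hgtV : Measurable[BV L M V] gt := hgt_meas.mono hm_le le_rfl
    have hu_meas : Measurable[BV L M V] ((π ⁻¹' s).indicator gt) := hgtV.indicator hTV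
    have hu_bdd : ∀ x, |((π ⁻¹' s).indicator gt) x| ≤ Cg := by
      intro x
      by_cases hx : x ∈ π ⁻¹' s <;>
        simp [Set.indicator, hx, hgt_bdd x, hCg0]
    have hv_meas : Measurable[BV L M V] ((π ⁻¹' s).indicator g) := hgmeasV.indicator hTV
    have hv_bdd : ∀ x, |((π ⁻¹' s).indicator g) x| ≤ Cg := by
      intro x
      by_cases hx : x ∈ π ⁻¹' s <;>
        simp [Set.indicator, hx, hCg x, hCg0]
    have hfub_u := (hFub J ((π ⁻¹' s).indicator gt) ⟨Cg, hu_bdd⟩ hu_meas).2.2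
    have hfub_v := (hFub J ((π ⁻¹' s).indicator g) ⟨Cg, hv_bdd⟩ hv_meas).2.2
    have hslice_u : ∀ (b : ↥(Jᶜ) → M) (a : ↥J → M),
        ((π ⁻¹' s).indicator gt) (combine J a b) = s.indicator g'' a := by
      intro b a
      by_cases ha : a ∈ s
      · have hmem : combine J a b ∈ π ⁻¹' s := by
          rw [Set.mem_preimage, hπcomb]; exact ha
        rw [Set.indicator_of_mem hmem, Set.indicator_of_mem ha, hg''_slice]
      · have hmem : combine J a b ∉ π ⁻¹' s := by
          rw [Set.mem_preimage, hπcomb]; exact ha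
        rw [Set.indicator_of_notMem hmem, Set.indicator_of_notMem ha]
    have hslice_v : ∀ (b : ↥(Jᶜ) → M) (a : ↥J → M),
        ((π ⁻¹' s).indicator g) (combine J a b) = s.indicator G a := by
      intro b a
      by_cases ha : a ∈ s
      · have hmem : combine J a b ∈ π ⁻¹' s := by
          rw [Set.mem_preimage, hπcomb]; exact ha
        rw [Set.indicator_of_mem hmem, Set.indicator_of_mem ha, hG_slice]
      · have hmem : combine J a b ∉ π ⁻¹' s := by
          rw [Set.mem_preimage, hπcomb]; exact ha
        rw [Set.indicator_of_notMem hmem, Set.indicator_of_notMem ha]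
    have step_u : ∫ x, ((π ⁻¹' s).indicator gt) x ∂νV = ∫ a in s, g'' a ∂(ν J) := by
      rw [hfub_u]
      have : ∀ b : ↥(Jᶜ) → M, ∫ a, ((π ⁻¹' s).indicator gt) (combine J a b) ∂(ν J)
          = ∫ a in s, g'' a ∂(ν J) := by
        intro b
        rw [show (fun a => ((π ⁻¹' s).indicator gt) (combine J a b)) = s.indicator g''
          from funext fun a => hslice_u b a]
        exact integral_indicator hsBV
      rw [integral_congr_ae (Filter.Eventually.of_forall this)]
      simp [measure_univ]
    have step_v : ∫ x, ((π ⁻¹' s).indicator g) x ∂νV = ∫ a in s, G a ∂(ν J) := by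
      rw [hfub_v]
      have : ∀ b : ↥(Jᶜ) → M, ∫ a, ((π ⁻¹' s).indicator g) (combine J a b) ∂(ν J)
          = ∫ a in s, G a ∂(ν J) := by
        intro b
        rw [show (fun a => ((π ⁻¹' s).indicator g) (combine J a b)) = s.indicator G
          from funext fun a => hslice_v b a]
        exact integral_indicator hsBV
      rw [integral_congr_ae (Filter.Eventually.of_forall this)]
      simp [measure_univ]
    have hind_u : ∫ x, ((π ⁻¹' s).indicator gt) x ∂νV = ∫ x in π ⁻¹' s, gt x ∂νV :=
      integral_indicator hTV
    have hind_v : ∫ x, ((π ⁻¹' s).indicator g) x ∂νV = ∫ x in π ⁻¹' s, g x ∂νV :=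
      integral_indicator hTV
    have hTint : ∫ x in π ⁻¹' s, gt x ∂νV = ∫ x in π ⁻¹' s, g x ∂νV := by
      rw [integral_congr_ae (ae_restrict_of_ae hgt_ae)]
      exact setIntegral_condExp hm_le hgInt hTm
    rw [← step_u, hind_u, hTint, ← hind_v, step_v]
  haveI hSFn : SigmaFinite ((ν J).trim hn_le) := inferInstance
  have hver : g'' =ᵐ[ν J] MeasureTheory.condExp n (ν J) G := by
    refine ae_eq_condExp_of_forall_setIntegral_eq hn_le hGInt
      (fun s hs _ => (intJ g'' Cg (hg''_meas.mono hn_le le_rfl) hg''_bdd).integrableOn)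
      (fun s hs _ => key_setInt s hs)
      (hg''_meas.stronglyMeasurable.aestronglyMeasurable)
  -- measurability of slices of the product
  have hφ : ∀ I ∈ 𝓘, ∀ b : ↥(Jᶜ) → M, Measurable[n] (fun a => f I (combine J a b)) := by
    intro I hI b
    have hcomb : @Measurable (↥J → M) (V → M) n (sigmaAlg L M ({I} : Set (Set V)))
        (fun a => combine J a b) := by
      refine measurable_into_sigmaAlg _ _ ?_
      intro S hS
      simp only [Set.mem_iUnion, Set.mem_singleton_iff] at hS
      obtain ⟨I', hI'eq, hSI⟩ := hS
      rw [hI'eq] at hSI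
      have hmem := slice_mem_defCyl (L := L) b hSI
      have hsub : sigmaAlg L M ({(Subtype.val ⁻¹' I : Set ↥J)} : Set (Set ↥J)) ≤ n := by
        rw [hndef]
        apply sigmaAlg_mono
        rintro K hK
        rw [Set.mem_singleton_iff] at hK
        subst hK
        refine ⟨Subtype.val ⁻¹' I, ⟨I, hI, ?_⟩, subset_rfl⟩
        rintro v ⟨j, hj, rfl⟩
        exact ⟨hj, j.2⟩
      refine hsub _ (MeasurableSpace.measurableSet_generateFrom
        (Set.mem_iUnion₂.2 ⟨Subtype.val ⁻¹' I, rfl, hmem⟩))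
    exact ((hf I hI).2).comp hcomb
  -- per-b inner identity
  have inner_eq : ∀ b : ↥(Jᶜ) → M,
      ∫ a, (fun x => g x * ∏ I ∈ 𝓘, f I x) (combine J a b) ∂(ν J)
        = ∫ a, (fun x => gt x * ∏ I ∈ 𝓘, f I x) (combine J a b) ∂(ν J) := by
    intro b
    set Φ : (↥J → M) → ℝ := fun a => ∏ I ∈ 𝓘, f I (combine J a b) with hΦdef
    have hΦmeas : Measurable[n] Φ := by
      rw [hΦdef]
      exact Finset.measurable_prod _ fun I hI => hφ I hI b
    have hΦbdd : ∀ a, |Φ a| ≤ CF := fun a => hFbdd _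
    have hΦmeasBV : Measurable[BV L M ↥J] Φ := hΦmeas.mono hn_le le_rfl
    have hΦGint : Integrable (Φ * G) (ν J) := by
      refine intJ (Φ * G) (CF * Cg) (hΦmeasBV.mul hG_meas) fun a => ?_
      rw [Pi.mul_apply, abs_mul]
      exact mul_le_mul (hΦbdd a) (hG_bdd a) (abs_nonneg _) hCF0
    have hpull : (MeasureTheory.condExp n (ν J) (Φ * G)) =ᵐ[ν J]
        Φ * MeasureTheory.condExp n (ν J) G := by
      refine condExp_stronglyMeasurable_mul_of_bound hn_le hΦmeas.stronglyMeasurable hGInt CF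
        (Filter.Eventually.of_forall fun a => ?_)
      simpa [Real.norm_eq_abs] using hΦbdd a
    have lhs_eq : (fun a => (fun x => g x * ∏ I ∈ 𝓘, f I x) (combine J a b))
        = fun a => (Φ * G) a := by
      funext a
      simp only [Pi.mul_apply]
      rw [hG_slice a b, hΦdef, mul_comm]
    have rhs_eq : (fun a => (fun x => gt x * ∏ I ∈ 𝓘, f I x) (combine J a b))
        = fun a => Φ a * g'' a := by
      funext a
      simp only
      rw [hg''_slice a b, hΦdef, mul_comm]
    calc ∫ a, (fun x => g x * ∏ I ∈ 𝓘, f I x) (combine J a b) ∂(ν J)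
        = ∫ a, (Φ * G) a ∂(ν J) := by rw [lhs_eq]
      _ = ∫ a, (MeasureTheory.condExp n (ν J) (Φ * G)) a ∂(ν J) :=
          (integral_condExp hn_le).symm
      _ = ∫ a, (Φ * MeasureTheory.condExp n (ν J) G) a ∂(ν J) := integral_congr_ae hpull
      _ = ∫ a, Φ a * g'' a ∂(ν J) := by
          refine integral_congr_ae (hver.mono fun a ha => ?_)
          rw [Pi.mul_apply, ← ha]
      _ = ∫ a, (fun x => gt x * ∏ I ∈ 𝓘, f I x) (combine J a b) ∂(ν J) := by rw [rhs_eq]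
  -- outer identity
  have hgF_meas : Measurable[BV L M V] (fun x => g x * ∏ I ∈ 𝓘, f I x) :=
    hgmeasV.mul hFmeas
  have hgF_bdd : ∀ x, |g x * ∏ I ∈ 𝓘, f I x| ≤ Cg * CF := by
    intro x
    rw [abs_mul]
    exact mul_le_mul (hCg x) (hFbdd x) (abs_nonneg _) hCg0
  have hgtF_meas : Measurable[BV L M V] (fun x => gt x * ∏ I ∈ 𝓘, f I x) :=
    (hgt_meas.mono hm_le le_rfl).mul hFmeas
  have hgtF_bdd : ∀ x, |gt x * ∏ I ∈ 𝓘, f I x| ≤ Cg * CF := by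
    intro x
    rw [abs_mul]
    exact mul_le_mul (hgt_bdd x) (hFbdd x) (abs_nonneg _) hCg0
  have fub1 := (hFub J (fun x => g x * ∏ I ∈ 𝓘, f I x) ⟨Cg * CF, hgF_bdd⟩ hgF_meas).2.2
  have fub2 := (hFub J (fun x => gt x * ∏ I ∈ 𝓘, f I x) ⟨Cg * CF, hgtF_bdd⟩ hgtF_meas).2.2
  have houter : ∫ x, g x * ∏ I ∈ 𝓘, f I x ∂νV = ∫ x, gt x * ∏ I ∈ 𝓘, f I x ∂νV := by
    rw [fub1, fub2]
    exact integral_congr_ae (Filter.Eventually.of_forall fun b => inner_eq b)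
  -- conclusion
  have hcongr : (fun x => (g x - gc x) * ∏ I ∈ 𝓘, f I x)
      =ᵐ[νV] fun x => g x * ∏ I ∈ 𝓘, f I x - gt x * ∏ I ∈ 𝓘, f I x := by
    refine hgt_ae.mono fun x hx => ?_
    show (g x - gc x) * ∏ I ∈ 𝓘, f I x
      = g x * ∏ I ∈ 𝓘, f I x - gt x * ∏ I ∈ 𝓘, f I x
    rw [← hx]
    ring
  have hz : ∫ x, (g x * ∏ I ∈ 𝓘, f I x - gt x * ∏ I ∈ 𝓘, f I x) ∂νV = 0 := by
    rw [integral_sub (intV _ (Cg * CF) hgF_meas hgF_bdd) (intV _ (Cg * CF) hgtF_meas hgtF_bdd),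
      houter, sub_self]
  exact (integral_congr_ae hcongr).trans hz
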